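/- For the basis vector e of U ⊆ U⊕V one has (2/(5+√5))·Σ_{i=0}^{4} ζ^i ⟨e, ρ₀^i(e)⟩ = (√5 − 1)/2; that is, with respect to the ℤ[ζ]-basis e of U⊕V, the hermitian matrix of h restricted to U⊕V is ((√5−1)/2). -/
import Mathlib


open Matrix

/-- Gram matrix of `U ⊕ V` in the basis `e, f, x, y`. -/
def G₀ : Matrix (Fin 4) (Fin 4) ℤ :=
  !![0, 1, 0, 0;
     1, 0, 0, 0;
     0, 0, 2, 1;
     0, 0, 1, -2]

/-- The bilinear form of `U ⊕ V`: `⟨u, v⟩ = uᵀ G₀ v`. -/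
def B (u v : Fin 4 → ℤ) : ℤ := u ⬝ᵥ G₀.mulVec v

/-- The matrix of `ρ₀`: `ρ₀(e) = -f`, `ρ₀(f) = -e - f - y`, `ρ₀(x) = f - x`,
`ρ₀(y) = 3f - x + y`. -/
def ρ₀ : Matrix (Fin 4) (Fin 4) ℤ :=
  !![0, -1, 0, 0;
     -1, -1, 1, 3;
     0, 0, -1, -1;
     0, -1, 0, 1]

/-- `ζ = e^{4πi/5}`, a primitive 5th root of unity. -/
noncomputable def ζ : ℂ := Complex.exp (4 * Real.pi * Complex.I / 5)

/-- The basis vector `e` of `U`. -/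
def e : Fin 4 → ℤ := ![1, 0, 0, 0]

lemma pair_exp (θ : ℝ) :
    Complex.exp ((θ : ℂ) * Complex.I) + Complex.exp (-(θ : ℂ) * Complex.I) =
      (2 : ℂ) * (Real.cos θ : ℂ) := by
  rw [Complex.exp_mul_I, Complex.exp_mul_I, Complex.cos_neg, Complex.sin_neg,
    Complex.ofReal_cos]
  ring

lemma cos_two_pi_div_five' : Real.cos (2 * Real.pi / 5) = (Real.sqrt 5 - 1) / 4 := by
  have h : 2 * Real.pi / 5 = 2 * (Real.pi / 5) := by ring
  rw [h, Real.cos_two_mul, Real.cos_pi_div_five]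
  have h5 : Real.sqrt 5 ^ 2 = 5 := Real.sq_sqrt (by norm_num)
  nlinarith [h5]

lemma cos_four_pi_div_five' : Real.cos (4 * Real.pi / 5) = -(1 + Real.sqrt 5) / 4 := by
  have h : 4 * Real.pi / 5 = Real.pi - Real.pi / 5 := by ring
  rw [h, Real.cos_pi_sub, Real.cos_pi_div_five]
  ring

theorem stmt10 :
    ((2 / (5 + Real.sqrt 5) : ℝ) : ℂ) *
      ∑ i ∈ Finset.range 5, ζ ^ i * (B e ((ρ₀ ^ i).mulVec e) : ℂ) =
      ((Real.sqrt 5 - 1) / 2 : ℝ) := by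
  have h1 : ζ = Complex.exp (((4 * Real.pi / 5 : ℝ) : ℂ) * Complex.I) := by
    rw [ζ]; congr 1; push_cast; ring
  have h2 : ζ ^ 2 = Complex.exp (-((2 * Real.pi / 5 : ℝ) : ℂ) * Complex.I) := by
    rw [ζ, ← Complex.exp_nat_mul,
      show ((2 : ℕ) : ℂ) * (4 * (Real.pi : ℂ) * Complex.I / 5)
        = -((2 * Real.pi / 5 : ℝ) : ℂ) * Complex.I + 2 * (Real.pi : ℂ) * Complex.I by
        push_cast; ring,
      Complex.exp_add, Complex.exp_two_pi_mul_I, mul_one]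
  have h3 : ζ ^ 3 = Complex.exp (((2 * Real.pi / 5 : ℝ) : ℂ) * Complex.I) := by
    rw [ζ, ← Complex.exp_nat_mul,
      show ((3 : ℕ) : ℂ) * (4 * (Real.pi : ℂ) * Complex.I / 5)
        = ((2 * Real.pi / 5 : ℝ) : ℂ) * Complex.I + 2 * (Real.pi : ℂ) * Complex.I by
        push_cast; ring,
      Complex.exp_add, Complex.exp_two_pi_mul_I, mul_one]
  have h4 : ζ ^ 4 = Complex.exp (-((4 * Real.pi / 5 : ℝ) : ℂ) * Complex.I) := by
    rw [ζ, ← Complex.exp_nat_mul,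
      show ((4 : ℕ) : ℂ) * (4 * (Real.pi : ℂ) * Complex.I / 5)
        = -((4 * Real.pi / 5 : ℝ) : ℂ) * Complex.I + 2 * (Real.pi : ℂ) * Complex.I
          + 2 * (Real.pi : ℂ) * Complex.I by push_cast; ring,
      Complex.exp_add, Complex.exp_add, Complex.exp_two_pi_mul_I, mul_one, mul_one]
  have b0 : B e ((ρ₀ ^ 0).mulVec e) = 0 := by decide
  have b1 : B e ((ρ₀ ^ 1).mulVec e) = -1 := by decide
  have b2 : B e ((ρ₀ ^ 2).mulVec e) = 1 := by decide
  have b3 : B e ((ρ₀ ^ 3).mulVec e) = 1 := by decide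
  have b4 : B e ((ρ₀ ^ 4).mulVec e) = -1 := by decide
  rw [Finset.sum_range_succ, Finset.sum_range_succ, Finset.sum_range_succ,
    Finset.sum_range_succ, Finset.sum_range_succ, b0, b1, b2, b3, b4, Finset.sum_range_zero, zero_add]
  have hS : ζ ^ 0 * ((0 : ℤ) : ℂ) + ζ ^ 1 * ((-1 : ℤ) : ℂ) + ζ ^ 2 * ((1 : ℤ) : ℂ)
      + ζ ^ 3 * ((1 : ℤ) : ℂ) + ζ ^ 4 * ((-1 : ℤ) : ℂ)
      = (2 : ℂ) * (Real.cos (2 * Real.pi / 5) : ℂ)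
        - (2 : ℂ) * (Real.cos (4 * Real.pi / 5) : ℂ) := by
    rw [← pair_exp, ← pair_exp, ← h1, ← h2, ← h3, ← h4]
    push_cast; ring
  rw [hS, cos_two_pi_div_five', cos_four_pi_div_five']
  have h5 : Real.sqrt 5 ^ 2 = 5 := Real.sq_sqrt (by norm_num)
  have hpos : (5 : ℝ) + Real.sqrt 5 ≠ 0 := by positivity
  have key : (2 / (5 + Real.sqrt 5) : ℝ) *
      (2 * ((Real.sqrt 5 - 1) / 4) - 2 * (-(1 + Real.sqrt 5) / 4))
      = (Real.sqrt 5 - 1) / 2 := by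
    field_simp
    nlinarith [h5]
  exact_mod_cast key
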